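/- arXiv:2103.14759 — 2 statements merged into one kernel-verified Lean document; each statement's English description precedes it below -/
import Mathlib

section
/- The combined fidelity metric (4F−1)/3 = γ·e^{−t/σ} is not isotone as a single routing metric: there exist parameters (γ₁,t₁,σ₁) and (γ₂,t₂,σ₂) with γ₁·e^{−t₁/σ₁} ≥ γ₂·e^{−t₂/σ₂}, and a link extension (γ,t,σ) (which acts by γᵢ ↦ γᵢ·γ, tᵢ ↦ tᵢ+t, 1/σᵢ ↦ 1/σᵢ + 1/σ), such that after extension the order reverses: γ₁·γ·e^{−(t₁+t)/σ₁'} < γ₂·γ·e^{−(t₂+t)/σ₂'} where 1/σᵢ' = 1/σᵢ + 1/σ. -/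
theorem combined_fidelity_metric_not_isotone :
    ∃ γ₁ t₁ σ₁ γ₂ t₂ σ₂ γ t σ : ℝ,
      γ₁ ∈ Set.Ioc (0:ℝ) 1 ∧ γ₂ ∈ Set.Ioc (0:ℝ) 1 ∧ γ ∈ Set.Ioc (0:ℝ) 1 ∧
      0 < t₁ ∧ 0 < t₂ ∧ 0 < t ∧ 0 < σ₁ ∧ 0 < σ₂ ∧ 0 < σ ∧
      γ₁ * Real.exp (-t₁ / σ₁) ≥ γ₂ * Real.exp (-t₂ / σ₂) ∧
      γ₁ * γ * Real.exp (-(t₁ + t) * (1/σ₁ + 1/σ)) <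
        γ₂ * γ * Real.exp (-(t₂ + t) * (1/σ₂ + 1/σ)) := by
  refine ⟨1, 2, 2, 1, 1, 1, 1, 1, 1, ⟨one_pos, le_refl 1⟩, ⟨one_pos, le_refl 1⟩,
    ⟨one_pos, le_refl 1⟩, two_pos, one_pos, one_pos, two_pos, one_pos, one_pos, ?_, ?_⟩
  · norm_num
  · simp only [one_mul]
    apply Real.exp_lt_exp.mpr
    norm_num
end

section
/- Multi-objective shortest-star optimality: given k algebras for trees, each label-isotone with respect to its path parameters, and the dominance relation D (ω D ν iff f^j(ω) ⪯^j f^j(ν) for all j with strict inequality for at least one j), if a star contains a branch path₁ that is not Pareto-optimal, then there exists a star (replacing path₁ with a dominating path) that dominates or equals the original star in every objective. -/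
/-- Dominance relation between paths, measured by the per-objective path weights. -/
def Dominates {k : ℕ} {S : Type*} {W : Fin k → Type*} [∀ j, LinearOrder (W j)]
    (fp : (j : Fin k) → S → W j) (ω ν : S) : Prop :=
  (∀ j, fp j ω ≤ fp j ν) ∧ ∃ j, fp j ω < fp j ν

theorem multiobjective_shortest_star {k : ℕ} {S Ξ : Type*}
    {W : Fin k → Type*} [∀ j, LinearOrder (W j)]
    (ext : Ξ → S → Ξ)
    (fp : (j : Fin k) → S → W j) (ft : (j : Fin k) → Ξ → W j)
    (hiso : ∀ (j : Fin k) (t : Ξ) (σ₁ σ₂ : S),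
      fp j σ₁ ≤ fp j σ₂ → ft j (ext t σ₁) ≤ ft j (ext t σ₂))
    (X : Set S) (path₁ : S) (hpath₁ : path₁ ∈ X)
    (hnotPareto : ∃ p' ∈ X, Dominates fp p' path₁)
    (t : Ξ) :
    ∃ p' ∈ X, Dominates fp p' path₁ ∧
      ∀ j, ft j (ext t p') ≤ ft j (ext t path₁) := by
  obtain ⟨p', hp', hd⟩ := hnotPareto
  exact ⟨p', hp', hd, fun j => hiso j t p' path₁ (hd.1 j)⟩
end
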